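/- arXiv:1804.07069 — 2 statements merged into one kernel-verified Lean document; each statement's English description precedes it below -/
import Mathlib

section
/- Let X = (X_s)_{s≥0} be a real-valued process with X_0 = 0, almost surely càdlàg paths and independent increments, which is continuous in probability in the sense that for every fixed r > 0 one has X_{r−} = X_r almost surely. Fix t > 0 and let Y_s = X_t − X_{(t−s)−}. Then for all 0 ≤ u ≤ v ≤ t, the increment Y_v − Y_u has the same law as X_{t−u} − X_{t−v}. -/
open MeasureTheory ProbabilityTheory Filter Set

noncomputable section

/-- Left limit of a path, with the convention `x(u−) = x(0)` for `u ≤ 0`. -/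
def llim (x : ℝ → ℝ) (u : ℝ) : ℝ :=
  if u ≤ 0 then x 0 else Function.leftLim x u

/-- A path `x : ℝ → ℝ` is càdlàg (on `[0,∞)`): right-continuous at every `u ≥ 0`,
with left limits at every `u > 0`. -/
def IsCadlag (x : ℝ → ℝ) : Prop :=
  (∀ u : ℝ, 0 ≤ u → ContinuousWithinAt x (Set.Ici u) u) ∧
  (∀ u : ℝ, 0 < u → Tendsto x (nhdsWithin u (Set.Iio u)) (nhds (Function.leftLim x u)))

/-- The process `X` has independent increments. -/
def IndepIncrements {Ω : Type*} [MeasurableSpace Ω] (P : Measure Ω) (X : ℝ → Ω → ℝ) : Prop :=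
  ∀ (n : ℕ) (s : Fin (n + 1) → ℝ), (∀ i, 0 ≤ s i) → Monotone s →
    iIndepFun (m := fun _ : Fin n => (inferInstance : MeasurableSpace ℝ))
      (fun i ω => X (s i.succ) ω - X (s i.castSucc) ω) P

/-- The time reversed process `Y_s = X_t - X_{(t-s)-}`. -/
def Yrev {Ω : Type*} (X : ℝ → Ω → ℝ) (t s : ℝ) (ω : Ω) : ℝ :=
  X t ω - llim (fun u => X u ω) (t - s)

/-- The process `V_s = e^{-Y_s} ∫_0^s e^{Y_u} du`. -/
def Vproc {Ω : Type*} (X : ℝ → Ω → ℝ) (t s : ℝ) (ω : Ω) : ℝ :=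
  Real.exp (-(Yrev X t s ω)) * ∫ u in (0 : ℝ)..s, Real.exp (Yrev X t u ω)

/-- The exponential functional `I_s = ∫_0^s e^{-X_u} du`. -/
def Ifun {Ω : Type*} (X : ℝ → Ω → ℝ) (s : ℝ) (ω : Ω) : ℝ :=
  ∫ u in (0 : ℝ)..s, Real.exp (-(X u ω))

/-- The class `𝒞` of test functions. -/
def MemC (f : ℝ → ℝ) : Prop :=
  ContDiff ℝ 2 f ∧
  (∃ D : ℝ, ∀ y : ℝ, |f y| ≤ D ∧ |deriv f y| ≤ D ∧ |deriv (deriv f) y| ≤ D) ∧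
  (∃ D : ℝ, ∀ y : ℝ, 0 ≤ y → |deriv f y * y| ≤ D) ∧
  (∃ D : ℝ, ∀ y : ℝ, 0 ≤ y → |deriv (deriv f) y * y ^ 2| ≤ D) ∧
  f 0 = 0 ∧ deriv f 0 = 0

/-- `X` is a PII semimartingale with absolutely continuous characteristics `(b, c, K)`,
satisfying the integrability conditions (2) and (3) of the paper. -/
def HasACCharacteristics {Ω : Type*} [MeasurableSpace Ω] (P : Measure Ω) (X : ℝ → Ω → ℝ)
    (b c : ℝ → ℝ) (K : ℝ → Measure ℝ) : Prop :=
  (∀ u : ℝ, 0 ≤ c u) ∧ (∀ u : ℝ, K u {0} = 0) ∧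
  (∀ t : ℝ, 0 < t → IntegrableOn b (Set.Ioc 0 t) ∧ IntegrableOn c (Set.Ioc 0 t)) ∧
  (∀ r s : ℝ, 0 ≤ r → r ≤ s → ∀ lam : ℝ,
    ∫ ω, Complex.exp (Complex.I * (lam : ℂ) * ((X s ω - X r ω : ℝ) : ℂ)) ∂P =
      Complex.exp (∫ u in r..s,
        (Complex.I * (lam : ℂ) * (b u : ℂ) - (lam : ℂ) ^ 2 * (c u : ℂ) / 2 +
          ∫ x : ℝ, (Complex.exp (Complex.I * (lam : ℂ) * (x : ℂ)) - 1
            - Complex.I * (lam : ℂ) * (x : ℂ)) ∂(K u)))) ∧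
  (∀ t : ℝ, 0 < t →
    (∫⁻ u in Set.Ioc (0 : ℝ) t, ∫⁻ x : ℝ, ENNReal.ofReal (min (x ^ 2) 1) ∂(K u)) < ⊤ ∧
    (∫⁻ u in Set.Ioc (0 : ℝ) t,
      ∫⁻ x in {x : ℝ | 1 < |x|}, ENNReal.ofReal (Real.exp |x|) ∂(K u)) < ⊤)

/-- `ā_s = -b_{t-s} + c_{t-s}/2 + ∫ (e^{-x} - 1 + x) K_{t-s}(dx)`. -/
def abar (b c : ℝ → ℝ) (K : ℝ → Measure ℝ) (t s : ℝ) : ℝ :=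
  -b (t - s) + c (t - s) / 2 + ∫ x : ℝ, (Real.exp (-x) - 1 + x) ∂(K (t - s))

/-- The generator `𝒜_s` of the Markov process `V`. -/
def genA (b c : ℝ → ℝ) (K : ℝ → Measure ℝ) (t s : ℝ) (f : ℝ → ℝ) (y : ℝ) : ℝ :=
  (1 + y * abar b c K t s) * deriv f y + (1 / 2) * c (t - s) * y ^ 2 * deriv (deriv f) y +
    ∫ x : ℝ, (f (y * Real.exp (-x)) - f y - deriv f y * y * (Real.exp (-x) - 1)) ∂(K (t - s))

/-- `X` is a Lévy process with triplet `(b0, c0, K0)`. -/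
def IsLevy {Ω : Type*} [MeasurableSpace Ω] (P : Measure Ω) (X : ℝ → Ω → ℝ)
    (b0 c0 : ℝ) (K0 : Measure ℝ) : Prop :=
  (∀ᵐ ω ∂P, X 0 ω = 0) ∧
  (∀ᵐ ω ∂P, IsCadlag fun s => X s ω) ∧
  (∀ s : ℝ, Measurable (X s)) ∧
  IndepIncrements P X ∧
  (∀ r s : ℝ, 0 ≤ r → r ≤ s →
    P.map (fun ω => X s ω - X r ω) = P.map (X (s - r))) ∧
  (∀ r : ℝ, 0 < r → ∀ᵐ ω ∂P, Function.leftLim (fun u => X u ω) r = X r ω) ∧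
  0 ≤ c0 ∧ K0 {0} = 0 ∧
  (∫⁻ x : ℝ, ENNReal.ofReal (min (x ^ 2) 1) ∂K0) < ⊤ ∧
  (∀ s : ℝ, 0 ≤ s → ∀ lam : ℝ,
    ∫ ω, Complex.exp (Complex.I * (lam : ℂ) * ((X s ω : ℝ) : ℂ)) ∂P =
      Complex.exp ((s : ℂ) * (Complex.I * (lam : ℂ) * (b0 : ℂ) - (lam : ℂ) ^ 2 * (c0 : ℂ) / 2 +
        ∫ x : ℝ, (Complex.exp (Complex.I * (lam : ℂ) * (x : ℂ)) - 1
          - Complex.I * (lam : ℂ) * (x : ℂ)) ∂K0)))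

/-- `a_0 = -b_0 + c_0/2 + ∫ (e^{-x} - 1 + x) K_0(dx)`. -/
def a0 (b0 c0 : ℝ) (K0 : Measure ℝ) : ℝ :=
  -b0 + c0 / 2 + ∫ x : ℝ, (Real.exp (-x) - 1 + x) ∂K0

/-- Condition (2): `∫ (x² ∧ 1) K_0(dx) < ∞`. -/
def LevyCond1 (K0 : Measure ℝ) : Prop :=
  (∫⁻ x : ℝ, ENNReal.ofReal (min (x ^ 2) 1) ∂K0) < ⊤

/-- Condition (3): `∫_{|x|>1} e^{|x|} K_0(dx) < ∞`. -/
def LevyCond2 (K0 : Measure ℝ) : Prop :=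
  (∫⁻ x in {x : ℝ | 1 < |x|}, ENNReal.ofReal (Real.exp |x|) ∂K0) < ⊤

/-- `I_∞ = ∫_0^∞ e^{-X_u} du` (defined via the Lebesgue integral of the
nonnegative integrand). -/
def Iinf {Ω : Type*} (X : ℝ → Ω → ℝ) (ω : Ω) : ℝ :=
  (∫⁻ u in Set.Ioi (0 : ℝ), ENNReal.ofReal (Real.exp (-(X u ω)))).toReal

/-- law of the increments of the time-reversed process. -/
theorem stmt_2 {Ω : Type*} [MeasurableSpace Ω] (P : Measure Ω) [IsProbabilityMeasure P]
    (X : ℝ → Ω → ℝ)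
    (hX0 : ∀ᵐ ω ∂P, X 0 ω = 0)
    (hpaths : ∀ᵐ ω ∂P, IsCadlag fun s => X s ω)
    (hmeas : ∀ s : ℝ, Measurable (X s))
    (hindep : IndepIncrements P X)
    (hcont : ∀ r : ℝ, 0 < r → ∀ᵐ ω ∂P, Function.leftLim (fun u => X u ω) r = X r ω)
    (t : ℝ) (ht : 0 < t) :
    ∀ u v : ℝ, 0 ≤ u → u ≤ v → v ≤ t →
      P.map (fun ω => Yrev X t v ω - Yrev X t u ω) =
        P.map (fun ω => X (t - u) ω - X (t - v) ω) := by
  intro u v hu huv hvt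
  have key : ∀ r : ℝ, 0 ≤ r → ∀ᵐ ω ∂P, llim (fun s => X s ω) r = X r ω := by
    intro r hr
    rcases eq_or_lt_of_le hr with h | h
    · filter_upwards with ω; simp [llim, ← h]
    · filter_upwards [hcont r h] with ω hω
      simp [llim, not_le.mpr h, hω]
  apply Measure.map_congr
  filter_upwards [key (t - u) (by linarith), key (t - v) (by linarith)] with ω h1 h2
  simp only [Yrev, h1, h2]
  ring

end
end

section
/- Let f ∈ 𝒞 and define F(y,x) = f(y e^{−x}) − f(y) − f'(y) y (e^{−x} − 1) for y > 0 and x ∈ ℝ. Then there exists a constant C > 0 (depending only on D = sup_{y≥0} max(|f(y)|, |f'(y)|, |f'(y)y|, |f''(y)y²|)) such that for all y > 0 and all x ∈ ℝ: |F(y,x)| ≤ C ( e^{|x|} 1_{|x|>1} + x² 1_{|x|≤1} ). -/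
open MeasureTheory ProbabilityTheory Filter Set

noncomputable section

lemma taylor2_bound {f : ℝ → ℝ} (hf : ContDiff ℝ 2 f) {a b L : ℝ}
    (hL : ∀ t ∈ uIcc a b, |deriv (deriv f) t| ≤ L) :
    |f b - f a - deriv f a * (b - a)| ≤ L * (b - a) ^ 2 := by
  have hd1 : Differentiable ℝ f := hf.differentiable (by norm_num)
  have hd2 : Differentiable ℝ (deriv f) := by
    have h := (contDiff_succ_iff_deriv.mp (show ContDiff ℝ (1 + 1) f by exact_mod_cast hf)).2.2
    exact h.differentiable (by norm_num)
  have hconv : Convex ℝ (uIcc a b) := convex_uIcc a b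
  have hmem_a : a ∈ uIcc a b := left_mem_uIcc
  have hlip : ∀ t ∈ uIcc a b, |deriv f t - deriv f a| ≤ L * |b - a| := by
    intro t ht
    have h1 : ‖deriv f t - deriv f a‖ ≤ L * ‖t - a‖ :=
      hconv.norm_image_sub_le_of_norm_deriv_le (fun x _ => hd2 x)
        (fun x hx => hL x hx) hmem_a ht
    have h2 : |t - a| ≤ |b - a| := by
      rcases le_total a b with h | h
      · rw [uIcc_of_le h] at ht
        rw [abs_sub_le_iff, abs_of_nonneg (by linarith : (0:ℝ) ≤ b - a)]
        exact ⟨by linarith [ht.2], by linarith [ht.1]⟩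
      · rw [uIcc_of_ge h] at ht
        rw [abs_sub_le_iff, abs_of_nonpos (by linarith : b - a ≤ 0)]
        exact ⟨by linarith [ht.2], by linarith [ht.1]⟩
    have hLnn : 0 ≤ L := le_trans (abs_nonneg _) (hL a hmem_a)
    calc |deriv f t - deriv f a| ≤ L * |t - a| := h1
    _ ≤ L * |b - a| := mul_le_mul_of_nonneg_left h2 hLnn
  set g : ℝ → ℝ := fun t => f t - deriv f a * t with hg
  have hgd : ∀ t, HasDerivAt g (deriv f t - deriv f a) t := by
    intro t
    have := ((hd1 t).hasDerivAt).sub ((hasDerivAt_id t).const_mul (deriv f a))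
    rw [mul_one] at this
    exact this
  have hgd' : ∀ t, deriv g t = deriv f t - deriv f a := fun t => (hgd t).deriv
  have h3 : ‖g b - g a‖ ≤ (L * |b - a|) * ‖b - a‖ := by
    refine hconv.norm_image_sub_le_of_norm_deriv_le (fun x _ => (hgd x).differentiableAt)
      (fun x hx => ?_) hmem_a right_mem_uIcc
    rw [hgd' x]
    exact hlip x hx
  have heq : g b - g a = f b - f a - deriv f a * (b - a) := by simp [hg]; ring
  rw [heq] at h3
  calc |f b - f a - deriv f a * (b - a)| ≤ (L * |b - a|) * |b - a| := h3
  _ = L * (b - a) ^ 2 := by rw [mul_assoc, abs_mul_abs_self]; ring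

/-- bound on `F(y,x) = f(y e^{-x}) - f(y) - f'(y) y (e^{-x} - 1)`,
with a constant depending only on `D`. -/
theorem stmt_8 (D : ℝ) :
    ∃ C : ℝ, 0 < C ∧ ∀ f : ℝ → ℝ, MemC f →
      (∀ y : ℝ, 0 ≤ y → |f y| ≤ D ∧ |deriv f y| ≤ D ∧ |deriv f y * y| ≤ D ∧
        |deriv (deriv f) y * y ^ 2| ≤ D) →
      ∀ y : ℝ, 0 < y → ∀ x : ℝ,
        |f (y * Real.exp (-x)) - f y - deriv f y * y * (Real.exp (-x) - 1)| ≤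
          C * (if 1 < |x| then Real.exp |x| else x ^ 2) := by
  refine ⟨4 * (|D| + 1) * Real.exp 2, by positivity, ?_⟩
  intro f hf hb y hy x
  have hD0 : 0 ≤ D := le_trans (abs_nonneg _) (hb 0 le_rfl).1
  have hDle : D ≤ |D| := le_abs_self D
  set z := y * Real.exp (-x) with hz
  have hz0 : 0 < z := by positivity
  have htri : ∀ u v : ℝ, |u - v| ≤ |u| + |v| := fun u v => by
    rw [sub_eq_add_neg]
    exact (abs_add_le _ _).trans (by rw [abs_neg])
  by_cases hx : 1 < |x|
  · simp only [if_pos hx]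
    have hfz : |f z| ≤ D := (hb z hz0.le).1
    have hfy : |f y| ≤ D := (hb y hy.le).1
    have hfy' : |deriv f y * y| ≤ D := (hb y hy.le).2.2.1
    have hex : (1:ℝ) ≤ Real.exp |x| := Real.one_le_exp (abs_nonneg x)
    have he2 : (1:ℝ) ≤ Real.exp 2 := Real.one_le_exp (by norm_num)
    have he : |Real.exp (-x) - 1| ≤ 2 * Real.exp |x| := by
      have h1 : Real.exp (-x) ≤ Real.exp |x| := Real.exp_le_exp.mpr (neg_le_abs x)
      have h2 : 0 < Real.exp (-x) := Real.exp_pos _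
      calc |Real.exp (-x) - 1| ≤ |Real.exp (-x)| + |(1:ℝ)| := htri _ _
        _ = Real.exp (-x) + 1 := by rw [abs_of_pos h2, abs_one]
        _ ≤ 2 * Real.exp |x| := by linarith
    have hchain : |f z - f y - deriv f y * y * (Real.exp (-x) - 1)| ≤
        |f z| + |f y| + |deriv f y * y| * |Real.exp (-x) - 1| := by
      calc |f z - f y - deriv f y * y * (Real.exp (-x) - 1)|
          ≤ |f z - f y| + |deriv f y * y * (Real.exp (-x) - 1)| := htri _ _
        _ ≤ (|f z| + |f y|) + |deriv f y * y| * |Real.exp (-x) - 1| := by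
            rw [abs_mul]; gcongr; exact htri _ _
        _ = _ := by ring
    have habs : 0 ≤ |deriv f y * y| := abs_nonneg _
    calc |f z - f y - deriv f y * y * (Real.exp (-x) - 1)|
        ≤ |f z| + |f y| + |deriv f y * y| * |Real.exp (-x) - 1| := hchain
      _ ≤ D + D + D * (2 * Real.exp |x|) := by
          gcongr
      _ ≤ 4 * D * Real.exp |x| := by nlinarith [mul_le_mul_of_nonneg_left hex hD0]
      _ ≤ 4 * (|D| + 1) * Real.exp 2 * Real.exp |x| := by
          have h1 : 4 * D ≤ 4 * (|D| + 1) * Real.exp 2 := by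
            nlinarith [mul_nonneg (by positivity : (0:ℝ) ≤ |D| + 1)
              (by linarith : (0:ℝ) ≤ Real.exp 2 - 1)]
          exact mul_le_mul_of_nonneg_right h1 (Real.exp_pos _).le
  · push_neg at hx
    simp only [if_neg (not_lt.mpr hx)]
    have hxle : x ≤ 1 := le_trans (le_abs_self x) hx
    have hem : Real.exp (-1) ≤ Real.exp (-x) := Real.exp_le_exp.mpr (by linarith)
    have he1 : Real.exp (-1) ≤ 1 := by
      rw [show (1:ℝ) = Real.exp 0 by simp]
      exact Real.exp_le_exp.mpr (by norm_num)
    set m := y * Real.exp (-1) with hm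
    have hm0 : 0 < m := by positivity
    have hmem : ∀ t ∈ uIcc y z, m ≤ t := by
      intro t ht
      have h1 : m ≤ y := by nlinarith
      have h2 : m ≤ z := mul_le_mul_of_nonneg_left hem hy.le
      exact le_trans (le_inf h1 h2) ht.1
    have hL : ∀ t ∈ uIcc y z, |deriv (deriv f) t| ≤ D / m ^ 2 := by
      intro t ht
      have hmt := hmem t ht
      have ht0 : 0 < t := lt_of_lt_of_le hm0 hmt
      have h1 : |deriv (deriv f) t| * t ^ 2 ≤ D := by
        have := (hb t ht0.le).2.2.2
        rwa [abs_mul, abs_of_nonneg (sq_nonneg t)] at this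
      have h2 : |deriv (deriv f) t| ≤ D / t ^ 2 := by
        rw [le_div_iff₀ (by positivity)]; exact h1
      refine h2.trans ?_
      apply div_le_div_of_nonneg_left hD0 (by positivity)
      nlinarith
    have hT := taylor2_bound hf.1 hL
    have hFeq : f z - f y - deriv f y * y * (Real.exp (-x) - 1) =
        f z - f y - deriv f y * (z - y) := by rw [hz]; ring
    rw [hFeq]
    have hby : |z - y| ≤ 2 * |x| * y := by
      have heq : z - y = y * (Real.exp (-x) - 1) := by rw [hz]; ring
      rw [heq, abs_mul, abs_of_pos hy]
      have h2 := Real.abs_exp_sub_one_le (x := -x) (by rwa [abs_neg])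
      rw [abs_neg] at h2
      nlinarith
    have h2 : (z - y) ^ 2 ≤ 4 * x ^ 2 * y ^ 2 := by
      nlinarith [abs_nonneg (z - y), sq_abs (z - y), sq_abs x, abs_nonneg x, hy.le]
    have hbd : D / m ^ 2 * (z - y) ^ 2 ≤ 4 * (|D| + 1) * Real.exp 2 * x ^ 2 := by
      have h1 : Real.exp (-1) * Real.exp (-1) * Real.exp 2 = 1 := by
        rw [← Real.exp_add, ← Real.exp_add]; norm_num
      rw [div_mul_eq_mul_div, div_le_iff₀ (by positivity : (0:ℝ) < m ^ 2)]
      have hm2 : m ^ 2 = y ^ 2 * (Real.exp (-1) * Real.exp (-1)) := by rw [hm]; ring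
      rw [hm2]
      calc D * (z - y) ^ 2 ≤ D * (4 * x ^ 2 * y ^ 2) := mul_le_mul_of_nonneg_left h2 hD0
        _ ≤ (|D| + 1) * (4 * x ^ 2 * y ^ 2) :=
            mul_le_mul_of_nonneg_right (by linarith) (by positivity)
        _ = 4 * (|D| + 1) * Real.exp 2 * x ^ 2 * (y ^ 2 * (Real.exp (-1) * Real.exp (-1))) := by
            linear_combination (-(4 * (|D| + 1) * x ^ 2 * y ^ 2)) * h1
    exact hT.trans hbd


end
end
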